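/- Let h > 0 and f : ℝ≥0 → ℝ continuous with f(0) = 0. Let σ₁ = sup{s ∈ [0,τ₁] : f(s) = inf_{[0,s]} f}, θ₁ = inf{s > 0 : f(s) − h = inf_{[0,s]} f}, τ₁ = inf{s > θ₁ : sup_{[θ₁,s]} f = f(s) + h}, and suppose τ₁ < ∞. Then for t ∈ [0,τ₁], the two-sided reflection is given explicitly: Λ_{0,h}(f)(t) = f(t) − inf_{[0,t]} f for t ∈ [0,σ₁]; Λ_{0,h}(f)(t) = f(t) − f(σ₁) for t ∈ [σ₁,θ₁]; and Λ_{0,h}(f)(t) = f(t) + h − sup_{[θ₁,t]} f for t ∈ [θ₁,τ₁]. In particular Λ_{0,h}(f)(σ₁) = 0, Λ_{0,h}(f)(θ₁) = h, and Λ_{0,h}(f)(τ₁) = 0. -/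

import Mathlib

open Set
open scoped NNReal ENNReal

/-- Solution data for the two-sided Skorohod reflection problem of `f` on `[0,h]`:
`c0` and `ch` are the compensators at `0` and at `h`,
and `fun t => f t + ch t + c0 t` is the reflected path `Λ_{0,h}(f)`.
The support conditions on the measures `dc⁰` and `d(−cʰ)` are phrased as:
the compensator is constant on every (closed) interval on which the reflected
path avoids the corresponding boundary. -/
structure SkorohodPair (h : ℝ) (f c0 ch : ℝ≥0 → ℝ) : Prop where
  cont0 : Continuous c0
  conth : Continuous ch
  init0 : c0 0 = 0
  inith : ch 0 = 0
  mem_Icc : ∀ t, f t + ch t + c0 t ∈ Set.Icc (0 : ℝ) h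
  mono0 : Monotone c0
  antih : Antitone ch
  flat0 : ∀ a b : ℝ≥0, a ≤ b → (∀ t ∈ Set.Icc a b, f t + ch t + c0 t ≠ 0) → c0 b = c0 a
  flath : ∀ a b : ℝ≥0, a ≤ b → (∀ t ∈ Set.Icc a b, f t + ch t + c0 t ≠ h) → ch b = ch a

/-- `eInf S` : infimum of a set of times, in `ℝ≥0∞`, with the convention `inf ∅ = ∞`. -/
noncomputable def eInf (S : Set ℝ≥0) : ℝ≥0∞ := sInf ((fun x : ℝ≥0 => (x : ℝ≥0∞)) '' S)

/-- `eSup S` : supremum of a set of times, in `ℝ≥0∞`. -/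
noncomputable def eSup (S : Set ℝ≥0) : ℝ≥0∞ := sSup ((fun x : ℝ≥0 => (x : ℝ≥0∞)) '' S)

/-- `inf_{[a,s]} f`, where the left endpoint `a` may be infinite. -/
noncomputable def infBetween (f : ℝ≥0 → ℝ) (a : ℝ≥0∞) (s : ℝ≥0) : ℝ :=
  sInf (f '' {u : ℝ≥0 | a ≤ (u : ℝ≥0∞) ∧ u ≤ s})

/-- `sup_{[a,s]} f`, where the left endpoint `a` may be infinite. -/
noncomputable def supBetween (f : ℝ≥0 → ℝ) (a : ℝ≥0∞) (s : ℝ≥0) : ℝ :=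
  sSup (f '' {u : ℝ≥0 | a ≤ (u : ℝ≥0∞) ∧ u ≤ s})

/-- `θ_{n+1} = inf {s > τ_n : f s − h = inf_{[τ_n,s]} f}`. -/
noncomputable def thetaNext (h : ℝ) (f : ℝ≥0 → ℝ) (τ : ℝ≥0∞) : ℝ≥0∞ :=
  eInf {s : ℝ≥0 | τ < (s : ℝ≥0∞) ∧ f s - h = infBetween f τ s}

/-- `τ_{n+1} = inf {s > θ_{n+1} : sup_{[θ_{n+1},s]} f = f s + h}`. -/
noncomputable def tauNext (h : ℝ) (f : ℝ≥0 → ℝ) (τ : ℝ≥0∞) : ℝ≥0∞ :=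
  eInf {s : ℝ≥0 | thetaNext h f τ < (s : ℝ≥0∞) ∧
    supBetween f (thetaNext h f τ) s = f s + h}

/-- The sequence `(τ_n)` of completion times of the sub-excursions of height `h`. -/
noncomputable def tauSeq (h : ℝ) (f : ℝ≥0 → ℝ) : ℕ → ℝ≥0∞
  | 0 => 0
  | n + 1 => tauNext h f (tauSeq h f n)

/-- `σ_{n+1} = sup {s ∈ [τ_n, τ_{n+1}] : f s = inf_{[τ_n,s]} f}` (and `σ₀ = 0`). -/
noncomputable def sigmaSeq (h : ℝ) (f : ℝ≥0 → ℝ) : ℕ → ℝ≥0∞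
  | 0 => 0
  | n + 1 => eSup {s : ℝ≥0 | tauSeq h f n ≤ (s : ℝ≥0∞) ∧ (s : ℝ≥0∞) ≤ tauSeq h f (n + 1) ∧
      f s = infBetween f (tauSeq h f n) s}

/-- The returning times of a path `Λ` to level `0` after visiting level `h`:
`t₀ = 0`, `T_{n+1} = inf {u > t_n : Λ u = h}`, `t_{n+1} = inf {u > T_{n+1} : Λ u = 0}`. -/
noncomputable def retSeq (h : ℝ) (Λ : ℝ≥0 → ℝ) : ℕ → ℝ≥0∞
  | 0 => 0
  | n + 1 =>
      eInf {u : ℝ≥0 |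
        eInf {v : ℝ≥0 | retSeq h Λ n < (v : ℝ≥0∞) ∧ Λ v = h} < (u : ℝ≥0∞) ∧ Λ u = 0}

/-- The exit times of `Λ` at level `0`: `s_{n+1} = sup {u ∈ [t_n, t_{n+1}) : Λ u = 0}`. -/
noncomputable def exitSeq (h : ℝ) (Λ : ℝ≥0 → ℝ) : ℕ → ℝ≥0∞
  | 0 => 0
  | n + 1 => eSup {u : ℝ≥0 | retSeq h Λ n ≤ (u : ℝ≥0∞) ∧ (u : ℝ≥0∞) < retSeq h Λ (n + 1) ∧
      Λ u = 0}

/-! ### Auxiliary lemmas: running suprema and infima of a continuous path -/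

noncomputable def rS (f : ℝ≥0 → ℝ) (a t : ℝ≥0) : ℝ := sSup (f '' Icc a t)
noncomputable def rI (f : ℝ≥0 → ℝ) (a t : ℝ≥0) : ℝ := sInf (f '' Icc a t)

section rlem
variable {f : ℝ≥0 → ℝ} {a b c s t u : ℝ≥0} (hf : Continuous f)
include hf

lemma img_cpt : IsCompact (f '' Icc a t) := isCompact_Icc.image hf

omit hf in
lemma img_ne (f : ℝ≥0 → ℝ) (h : a ≤ t) : (f '' Icc a t).Nonempty := (nonempty_Icc.2 h).image _

lemma rS_mem (h : a ≤ t) : rS f a t ∈ f '' Icc a t :=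
  (img_cpt hf).sSup_mem (img_ne f h)

lemma le_rS (hu : u ∈ Icc a t) : f u ≤ rS f a t :=
  le_csSup (img_cpt hf).bddAbove (mem_image_of_mem f hu)

lemma rS_mono (h1 : a ≤ s) (h2 : s ≤ t) : rS f a s ≤ rS f a t :=
  csSup_le_csSup (img_cpt hf).bddAbove (img_ne f h1) (image_mono (Icc_subset_Icc_right h2))

lemma rS_split (h1 : a ≤ b) (h2 : b ≤ c) : rS f a c = max (rS f a b) (rS f b c) := by
  rw [rS, ← Icc_union_Icc_eq_Icc h1 h2, image_union,
    csSup_union (img_cpt hf).bddAbove (img_ne f h1) (img_cpt hf).bddAbove (img_ne f h2)]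
  rfl

omit hf in
lemma rS_self : rS f a a = f a := by
  rw [rS, Icc_self, image_singleton, csSup_singleton]

lemma rS_contOn : ContinuousOn (rS f a) (Ici a) := by
  intro x hx
  rw [Metric.continuousWithinAt_iff]
  intro ε hε
  obtain ⟨δ, hδ, hfx⟩ := Metric.continuousAt_iff.1 (hf.continuousAt (x := x)) (ε/2) (by positivity)
  refine ⟨δ, hδ, fun {y} hy hyd => ?_⟩
  have key : ∀ p q : ℝ≥0, a ≤ p → p ≤ q → dist q x < δ → dist p x < δ →
      |rS f a q - rS f a p| < ε := by
    intro p q hap hpq hqd hpd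
    have hsplit := rS_split hf hap hpq
    have hmono : rS f a p ≤ rS f a q := rS_mono hf hap hpq
    rw [abs_of_nonneg (by linarith)]
    obtain ⟨u, hu, huv⟩ := rS_mem hf hpq
    have hud : dist u x < δ := by
      rw [NNReal.dist_eq] at *
      rw [abs_sub_lt_iff] at *
      constructor
      · calc (u:ℝ) - x ≤ q - x := by have := hu.2; exact sub_le_sub_right (by exact_mod_cast this) _
          _ < δ := hqd.1
      · calc (x:ℝ) - u ≤ x - p := by have := hu.1; exact sub_le_sub_left (by exact_mod_cast this) _
          _ < δ := hpd.2
    have h1 : f u < f x + ε/2 := by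
      have := hfx hud; rw [Real.dist_eq, abs_sub_lt_iff] at this; linarith [this.1]
    have h2 : f x < f p + ε/2 := by
      have := hfx hpd; rw [Real.dist_eq, abs_sub_lt_iff] at this; linarith [this.2]
    have h3 : f p ≤ rS f a p := le_rS hf ⟨hap, le_refl p⟩
    have : rS f a q ≤ max (rS f a p) (f u) := by rw [hsplit, ← huv]
    have := le_max_iff.1 this
    rcases this with h | h <;> linarith
  rcases le_total x y with hxy | hyx
  · rw [Real.dist_eq]; exact key x y hx hxy hyd (by simpa using hδ)
  · rw [Real.dist_eq, abs_sub_comm]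
    exact key y x hy hyx (by simpa using hδ) hyd

lemma rS_cont : Continuous (fun t => rS f a (max a t)) :=
  (rS_contOn hf).comp_continuous (continuous_const.max continuous_id) (fun _ => mem_Ici.2 (le_max_left _ _))

omit hf in
lemma rI_eq_neg (f : ℝ≥0 → ℝ) (a t : ℝ≥0) : rI f a t = -rS (fun u => -f u) a t := by
  rw [rI, rS]
  have : ((fun u => -f u) '' Icc a t) = -(f '' Icc a t) := by
    ext x
    simp only [Set.mem_neg, Set.mem_image, mem_Icc]
    constructor
    · rintro ⟨u, hu, rfl⟩; exact ⟨u, hu, by ring⟩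
    · rintro ⟨u, hu, h⟩; exact ⟨u, hu, by rw [h]; ring⟩
  rw [this, Real.sInf_def]

lemma rI_mem (h : a ≤ t) : rI f a t ∈ f '' Icc a t :=
  (img_cpt hf).sInf_mem (img_ne f h)

lemma rI_le (hu : u ∈ Icc a t) : rI f a t ≤ f u :=
  csInf_le (img_cpt hf).bddBelow (mem_image_of_mem f hu)

lemma rI_anti (h1 : a ≤ s) (h2 : s ≤ t) : rI f a t ≤ rI f a s :=
  csInf_le_csInf (img_cpt hf).bddBelow (img_ne f h1) (image_mono (Icc_subset_Icc_right h2))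

lemma rI_split (h1 : a ≤ b) (h2 : b ≤ c) : rI f a c = min (rI f a b) (rI f b c) := by
  rw [rI_eq_neg, rI_eq_neg, rI_eq_neg, rS_split (f := fun u => -f u) hf.neg h1 h2]
  rw [show ∀ x y : ℝ, -(max x y) = min (-x) (-y) from fun x y => by rcases le_total x y with hl | hl <;> simp [max_eq_right, max_eq_left, min_eq_left, min_eq_right, hl, neg_le_neg hl]]

omit hf in
lemma rI_self : rI f a a = f a := by
  rw [rI, Icc_self, image_singleton, csInf_singleton]

lemma rI_cont : Continuous (fun t => rI f a (max a t)) := by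
  have := (rS_cont (f := fun u => -f u) (a := a) hf.neg).neg
  convert this using 2 with t
  rw [rI_eq_neg]; rfl

end rlem

/-! ### Reading off finite times from `eInf` / `eSup` -/

lemma eInf_coe {S : Set ℝ≥0} {x : ℝ≥0} (hx : (x:ℝ≥0∞) = eInf S) :
    S.Nonempty ∧ x = sInf S := by
  have hne : S.Nonempty := by
    by_contra hemp
    rw [not_nonempty_iff_eq_empty] at hemp
    rw [eInf, hemp, image_empty, sInf_empty] at hx
    exact ENNReal.coe_ne_top hx
  refine ⟨hne, ?_⟩
  rw [eInf, sInf_image] at hx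
  rw [← ENNReal.coe_sInf hne] at hx
  exact_mod_cast hx

lemma eSup_coe {S : Set ℝ≥0} {x : ℝ≥0} (hbdd : BddAbove S) (hx : (x:ℝ≥0∞) = eSup S) :
    x = sSup S := by
  rw [eSup, sSup_image, ← ENNReal.coe_sSup hbdd] at hx
  exact_mod_cast hx

/-! ### Uniqueness of the two-sided reflection, localized on `[0,T]` -/

lemma skorohod_le (h : ℝ) (f c0 ch c0' ch' : ℝ≥0 → ℝ) (T : ℝ≥0)
    (hc0 : Continuous c0) (hch : Continuous ch) (hc0' : Continuous c0') (hch' : Continuous ch')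
    (hi : c0 0 = 0) (hi2 : ch 0 = 0) (hi3 : c0' 0 = 0) (hi4 : ch' 0 = 0)
    (mem' : ∀ t, t ≤ T → 0 ≤ f t + ch' t + c0' t)
    (memh : ∀ t, t ≤ T → f t + ch t + c0 t ≤ h)
    (mono0' : Monotone c0') (antih : Antitone ch)
    (flat0 : ∀ a b : ℝ≥0, a ≤ b → b ≤ T → (∀ u ∈ Icc a b, f u + ch u + c0 u ≠ 0) → c0 b = c0 a)
    (flath' : ∀ a b : ℝ≥0, a ≤ b → b ≤ T → (∀ u ∈ Icc a b, f u + ch' u + c0' u ≠ h) → ch' b = ch' a) :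
    ∀ t, t ≤ T → f t + ch t + c0 t ≤ f t + ch' t + c0' t := by
  intro t ht
  by_contra hgt
  push_neg at hgt
  set g : ℝ≥0 → ℝ := fun u => (c0 u + ch u) - (c0' u + ch' u) with hg
  have hgc : Continuous g := ((hc0.add hch).sub (hc0'.add hch'))
  have hgt' : 0 < g t := by simp only [hg]; linarith
  set B := {u : ℝ≥0 | u ≤ t ∧ g u ≤ 0} with hB
  have hB0 : (0:ℝ≥0) ∈ B := ⟨zero_le, by simp [hg, hi, hi2, hi3, hi4]⟩
  have hBc : IsClosed B := (isClosed_Iic).inter (isClosed_le hgc continuous_const)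
  have hBcpt : IsCompact B :=
    isCompact_Icc.of_isClosed_subset hBc (fun u hu => ⟨zero_le, hu.1⟩)
  set s := sSup B with hs
  have hsB : s ∈ B := hBcpt.sSup_mem ⟨0, hB0⟩
  have hst : s < t := lt_of_le_of_ne hsB.1 (fun e => by rw [e] at hsB; linarith [hsB.2])
  have hpos : ∀ u, s < u → u ≤ t → 0 < g u := by
    intro u h1 h2
    by_contra hc
    push_neg at hc
    exact absurd (le_csSup hBcpt.bddAbove (⟨h2, hc⟩ : u ∈ B)) (not_le.2 h1)
  have key : ∀ a, s < a → a ≤ t → g t ≤ (c0 a - c0 s) + (ch' s - ch' a) := by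
    intro a ha hat
    have hΛpos : ∀ u, u ∈ Icc a t → f u + ch' u + c0' u < f u + ch u + c0 u := by
      intro u hu
      have := hpos u (lt_of_lt_of_le ha hu.1) hu.2
      simp only [hg] at this; linarith
    have h0flat : c0 t = c0 a := by
      refine flat0 a t hat ht (fun u hu => ?_)
      have := lt_of_le_of_lt (mem' u (le_trans hu.2 ht)) (hΛpos u hu)
      linarith
    have hhflat : ch' t = ch' a := by
      refine flath' a t hat ht (fun u hu => ?_)
      have := lt_of_lt_of_le (hΛpos u hu) (memh u (le_trans hu.2 ht))
      linarith
    have m1 : c0' s ≤ c0' t := mono0' (le_of_lt hst)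
    have m2 : ch t ≤ ch s := antih (le_of_lt hst)
    have hgs : g s ≤ 0 := hsB.2
    simp only [hg] at hgs ⊢
    rw [h0flat, hhflat] at *
    linarith
  have hFc : ContinuousAt (fun a : ℝ≥0 => (c0 a - c0 s) + (ch' s - ch' a)) s :=
    ((hc0.sub continuous_const).add (continuous_const.sub hch')).continuousAt
  obtain ⟨δ, hδ, hδ'⟩ := Metric.continuousAt_iff.1 hFc (g t) hgt'
  set a : ℝ≥0 := min t (s + Real.toNNReal (δ/2)) with ha
  have hsa : s < a := by
    apply lt_min hst
    have : (0:ℝ≥0) < Real.toNNReal (δ/2) := by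
      simp [Real.toNNReal_pos]; linarith
    exact lt_add_of_pos_right s this
  have hat : a ≤ t := min_le_left _ _
  have hdist : dist a s < δ := by
    have h1 : a ≤ s + Real.toNNReal (δ/2) := min_le_right _ _
    have h2 : (a:ℝ) ≤ (s:ℝ) + δ/2 := by
      calc (a:ℝ) ≤ ((s + Real.toNNReal (δ/2) : ℝ≥0) : ℝ) := by exact_mod_cast h1
        _ ≤ (s:ℝ) + δ/2 := by
            push_cast
            simp [Real.coe_toNNReal']
            positivity
    have hsa' : (s:ℝ) ≤ (a:ℝ) := by exact_mod_cast le_of_lt hsa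
    rw [NNReal.dist_eq, abs_of_nonneg (sub_nonneg.2 hsa')]
    linarith
  have := hδ' hdist
  rw [Real.dist_eq] at this
  have h0 : (c0 s - c0 s) + (ch' s - ch' s) = 0 := by ring
  have habs : |(c0 a - c0 s) + (ch' s - ch' a) - 0| < g t := by
    simpa [h0] using this
  rw [sub_zero] at habs
  have := key a hsa hat
  have := abs_lt.1 habs
  linarith [this.2]

/-- **Explicit form of the two-sided reflection up to `τ₁`** (Step 1 of the proof of
Proposition 4): with `σ₁, θ₁, τ₁` as in the text (here given as finite times `σ, θ, τ`),
`Λ_{0,h}(f) = f − inf_{[0,·]} f` on `[0,σ₁]`, `Λ_{0,h}(f) = f − f(σ₁)` on `[σ₁,θ₁]`,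
`Λ_{0,h}(f) = f + h − sup_{[θ₁,·]} f` on `[θ₁,τ₁]`; in particular
`Λ(σ₁) = 0`, `Λ(θ₁) = h` and `Λ(τ₁) = 0`. -/
theorem two_sided_reflection_up_to_tau_one
    (h : ℝ) (hh : 0 < h) (f c0 ch : ℝ≥0 → ℝ) (hf : Continuous f) (hf0 : f 0 = 0)
    (hp : SkorohodPair h f c0 ch)
    (Λ : ℝ≥0 → ℝ) (hΛ : ∀ t, Λ t = f t + ch t + c0 t)
    (σ θ τ : ℝ≥0)
    (hσ : (σ : ℝ≥0∞) = sigmaSeq h f 1)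
    (hθ : (θ : ℝ≥0∞) = thetaNext h f 0)
    (hτ : (τ : ℝ≥0∞) = tauSeq h f 1) :
    (∀ t, t ≤ σ → Λ t = f t - sInf (f '' Set.Icc 0 t)) ∧
    (∀ t, σ ≤ t → t ≤ θ → Λ t = f t - f σ) ∧
    (∀ t, θ ≤ t → t ≤ τ → Λ t = f t + h - sSup (f '' Set.Icc θ t)) ∧
    Λ σ = 0 ∧ Λ θ = h ∧ Λ τ = 0 := by
  -- continuity of the running infimum
  have hm_cont : Continuous (fun t : ℝ≥0 => rI f 0 t) := by
    have h1 := rI_cont (a := (0:ℝ≥0)) hf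
    have he : (fun t : ℝ≥0 => rI f 0 (max 0 t)) = fun t => rI f 0 t := by
      funext t; rw [max_eq_right (zero_le)]
    rwa [he] at h1
  have hinfB : ∀ s : ℝ≥0, infBetween f 0 s = rI f 0 s := by
    intro s
    rw [infBetween, rI]
    congr 2
    ext u
    simp [mem_Icc]
  -- extraction of θ
  set Sθ : Set ℝ≥0 := {s | 0 < s ∧ f s - h = rI f 0 s} with hSθdef
  have hθS : (θ:ℝ≥0∞) = eInf Sθ := by
    rw [hθ, thetaNext]
    congr 2
    ext s
    simp [hSθdef, hinfB s, ENNReal.coe_pos]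
  obtain ⟨hSθne, hθinf⟩ := eInf_coe hθS
  have hθ_lb : ∀ s ∈ Sθ, θ ≤ s := fun s hs => hθinf ▸ csInf_le (OrderBot.bddBelow _) hs
  have hθmem : θ ∈ {s : ℝ≥0 | f s - h = rI f 0 s} := by
    have hcl : IsClosed {s : ℝ≥0 | f s - h = rI f 0 s} :=
      isClosed_eq (hf.sub continuous_const) hm_cont
    have hsub : Sθ ⊆ {s : ℝ≥0 | f s - h = rI f 0 s} := fun s hs => hs.2
    have hmemc := csInf_mem_closure hSθne (OrderBot.bddBelow _)
    rw [← hθinf] at hmemc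
    exact closure_minimal hsub hcl hmemc
  have hmθ : rI f 0 θ = f θ - h := hθmem.symm
  -- extraction of τ
  have hsupB : ∀ s : ℝ≥0, supBetween f (θ:ℝ≥0∞) s = rS f θ s := by
    intro s; rw [supBetween, rS]; congr 2; ext u
    simp [mem_Icc, ENNReal.coe_le_coe]
  set Sτ : Set ℝ≥0 := {s | θ < s ∧ rS f θ s = f s + h} with hSτdef
  have hτS : (τ:ℝ≥0∞) = eInf Sτ := by
    rw [hτ, show tauSeq h f 1 = tauNext h f 0 from by simp [tauSeq], tauNext]
    congr 2
    ext s
    rw [← hθ]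
    simp [hSτdef, hsupB s, ENNReal.coe_lt_coe]
  obtain ⟨hSτne, hτinf⟩ := eInf_coe hτS
  have hτ_lb : ∀ s ∈ Sτ, τ ≤ s := fun s hs => hτinf ▸ csInf_le (OrderBot.bddBelow _) hs
  have hMcont : Continuous fun t : ℝ≥0 => rS f θ (max θ t) := rS_cont hf
  have hτmem : θ ≤ τ ∧ rS f θ (max θ τ) = f τ + h := by
    have hcl : IsClosed {s : ℝ≥0 | θ ≤ s ∧ rS f θ (max θ s) = f s + h} :=
      (isClosed_le continuous_const continuous_id).inter
        (isClosed_eq hMcont (hf.add continuous_const))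
    have hsub : Sτ ⊆ {s : ℝ≥0 | θ ≤ s ∧ rS f θ (max θ s) = f s + h} :=
      fun s hs => ⟨hs.1.le, by rw [max_eq_right hs.1.le]; exact hs.2⟩
    have hmemc := csInf_mem_closure hSτne (OrderBot.bddBelow _)
    rw [← hτinf] at hmemc
    exact closure_minimal hsub hcl hmemc
  have hθτ : θ ≤ τ := hτmem.1
  have hMτ : rS f θ τ = f τ + h := by
    have := hτmem.2; rwa [max_eq_right hθτ] at this
  -- extraction of σ
  set A : Set ℝ≥0 := {s | s ≤ τ ∧ f s = rI f 0 s} with hAdef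
  have hσS : (σ:ℝ≥0∞) = eSup A := by
    rw [hσ, show sigmaSeq h f 1 = eSup {s : ℝ≥0 | tauSeq h f 0 ≤ (s:ℝ≥0∞) ∧
      (s:ℝ≥0∞) ≤ tauSeq h f 1 ∧ f s = infBetween f (tauSeq h f 0) s} from rfl]
    congr 2
    ext s
    rw [← hτ, show tauSeq h f 0 = (0:ℝ≥0∞) from rfl]
    simp [hAdef, hinfB s, ENNReal.coe_le_coe]
  have hAbdd : BddAbove A := ⟨τ, fun s hs => hs.1⟩
  have hσsup : σ = sSup A := eSup_coe hAbdd hσS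
  have hAne : A.Nonempty := ⟨0, zero_le, by rw [rI_self]⟩
  have hAcl : IsClosed A :=
    (isClosed_le continuous_id continuous_const).inter (isClosed_eq hf hm_cont)
  have hAcpt : IsCompact A :=
    isCompact_Icc.of_isClosed_subset hAcl (fun u hu => ⟨zero_le, hu.1⟩)
  have hσA : σ ∈ A := hσsup ▸ hAcpt.sSup_mem hAne
  have hσ_ub : ∀ s ∈ A, s ≤ σ := fun s hs => hσsup ▸ le_csSup hAbdd hs
  -- basic bounds
  have mlef : ∀ t : ℝ≥0, rI f 0 t ≤ f t := fun t => rI_le hf ⟨zero_le, le_rfl⟩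
  -- key inequalities
  have K1 : ∀ t, t ≤ θ → f t - rI f 0 t ≤ h := by
    intro t htθ
    by_contra hc; push_neg at hc
    have hiv := intermediate_value_Icc ((zero_le (a := t))) ((show Continuous (fun u => f u - rI f 0 u) from hf.sub hm_cont).continuousOn)
    have h0v : f 0 - rI f 0 0 = 0 := by rw [rI_self, sub_self]
    have hmem : h ∈ (fun u => f u - rI f 0 u) '' Icc 0 t := by
      apply hiv; rw [h0v]; exact ⟨hh.le, hc.le⟩
    obtain ⟨s, hs, hsv⟩ := hmem
    have hs0 : 0 < s := by
      rcases ((zero_le (a := s))).eq_or_lt with he | hlt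
      · exfalso
        rw [← he] at hsv
        simp only [rI_self, sub_self] at hsv
        exact absurd hsv.symm (ne_of_gt hh)
      · exact hlt
    have hsSθ : s ∈ Sθ := ⟨hs0, by dsimp only at hsv; linarith⟩
    have hθs := hθ_lb s hsSθ
    have hst : s = t := le_antisymm hs.2 (htθ.trans hθs)
    rw [hst] at hsv; dsimp only at hsv; linarith
  have K2 : ∀ t, θ ≤ t → t ≤ τ → rS f θ t - f t ≤ h := by
    intro t h1 h2
    by_contra hc; push_neg at hc
    have hiv := intermediate_value_Icc h1 ((show Continuous (fun u => rS f θ (max θ u) - f u) from hMcont.sub hf).continuousOn)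
    have h0v : rS f θ (max θ θ) - f θ = 0 := by rw [max_self, rS_self, sub_self]
    have hmem : h ∈ (fun u => rS f θ (max θ u) - f u) '' Icc θ t := by
      apply hiv
      rw [h0v]
      refine ⟨hh.le, ?_⟩
      rw [max_eq_right h1]
      exact hc.le
    obtain ⟨s, hs, hsv⟩ := hmem
    dsimp only at hsv
    rw [max_eq_right hs.1] at hsv
    have hsθ : θ < s := by
      rcases hs.1.eq_or_lt with he | hlt
      · exfalso; rw [← he, rS_self] at hsv; simp at hsv; linarith
      · exact hlt
    have hsSτ : s ∈ Sτ := ⟨hsθ, by linarith⟩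
    have hst : s = t := le_antisymm hs.2 (h2.trans (hτ_lb s hsSτ))
    rw [hst] at hsv
    linarith
  -- the explicit compensators
  set d0 : ℝ≥0 → ℝ := fun u => -(rI f 0 (min u θ)) with hd0
  set dh : ℝ≥0 → ℝ := fun u => f θ - rS f θ (max θ (min u τ)) with hdh
  have ev1 : ∀ u, u ≤ θ → f u + dh u + d0 u = f u - rI f 0 u := by
    intro u hu
    have e1 : min u θ = u := min_eq_left hu
    have e2 : min u τ = u := min_eq_left (hu.trans hθτ)
    have e3 : max θ u = θ := max_eq_left hu
    simp only [hd0, hdh, e1, e2, e3, rS_self]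
    ring
  have ev2 : ∀ u, θ ≤ u → u ≤ τ → f u + dh u + d0 u = f u + h - rS f θ u := by
    intro u h1 h2
    have e1 : min u θ = θ := min_eq_right h1
    have e2 : min u τ = u := min_eq_left h2
    have e3 : max θ u = u := max_eq_right h1
    simp only [hd0, hdh, e1, e2, e3]
    rw [hmθ]
    ring
  have hminθ : Continuous fun u : ℝ≥0 => min u θ := continuous_id.min continuous_const
  have hminτ : Continuous fun u : ℝ≥0 => min u τ := continuous_id.min continuous_const
  have hd0c : Continuous d0 := by
    have hcc : Continuous fun u : ℝ≥0 => rI f 0 (min u θ) := hm_cont.comp hminθ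
    exact hcc.neg
  have hdhc : Continuous dh := by
    have hcc : Continuous fun u : ℝ≥0 => rS f θ (max θ (min u τ)) := (rS_cont hf).comp hminτ
    exact continuous_const.sub hcc
  have hd00 : d0 0 = 0 := by
    simp only [hd0, min_eq_left ((zero_le (a := θ))), rI_self, hf0, neg_zero]
  have hdh0 : dh 0 = 0 := by
    simp only [hdh, min_eq_left ((zero_le (a := τ))), max_eq_left ((zero_le (a := θ))), rS_self, sub_self]
  have hd0mono : Monotone d0 := by
    intro u v huv
    simp only [hd0]
    exact neg_le_neg (rI_anti hf (zero_le) (min_le_min huv le_rfl))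
  have hdhanti : Antitone dh := by
    intro u v huv
    simp only [hdh]
    refine sub_le_sub_left (rS_mono hf (le_max_left _ _) ?_) _
    exact sup_le_sup_left (inf_le_inf_right _ huv) θ
  have dval_mem : ∀ t, t ≤ τ → 0 ≤ f t + dh t + d0 t ∧ f t + dh t + d0 t ≤ h := by
    intro t htτ
    rcases le_total t θ with h1 | h1
    · rw [ev1 t h1]; exact ⟨by linarith [mlef t], K1 t h1⟩
    · rw [ev2 t h1 htτ]
      refine ⟨by linarith [K2 t h1 htτ], ?_⟩
      have := le_rS hf (⟨h1, le_rfl⟩ : t ∈ Icc θ t)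
      linarith
  have dflat0 : ∀ a b : ℝ≥0, a ≤ b → b ≤ τ →
      (∀ u ∈ Icc a b, f u + dh u + d0 u ≠ 0) → d0 b = d0 a := by
    intro a b hab hbτ hne
    have key : rI f 0 (min b θ) = rI f 0 (min a θ) := by
      have hab' : min a θ ≤ min b θ := min_le_min hab le_rfl
      rcases (rI_anti hf (zero_le) hab' :
          rI f 0 (min b θ) ≤ rI f 0 (min a θ)).eq_or_lt with he | hlt
      · exact he
      · exfalso
        have haθ : a ≤ θ := by
          by_contra hcx; push_neg at hcx
          rw [min_eq_right hcx.le, min_eq_right (hcx.le.trans hab)] at hlt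
          exact lt_irrefl _ hlt
        have ha'' : min a θ = a := min_eq_left haθ
        have hsp := rI_split hf ((zero_le (a := (min a θ)))) hab'
        have hmid : rI f (min a θ) (min b θ) = rI f 0 (min b θ) := by
          rcases le_total (rI f 0 (min a θ)) (rI f (min a θ) (min b θ)) with hcx | hcx
          · rw [min_eq_left hcx] at hsp; exact absurd hsp (ne_of_lt hlt)
          · rw [min_eq_right hcx] at hsp; exact hsp.symm
        obtain ⟨u, hu, huv⟩ := rI_mem hf hab'
        have hfu : f u = rI f 0 (min b θ) := by rw [← hmid, huv]
        have hum : f u = rI f 0 u := by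
          have hx1 : rI f 0 u ≤ f u := mlef u
          have hx2 : rI f 0 (min b θ) ≤ rI f 0 u := rI_anti hf (zero_le) hu.2
          linarith [hfu ▸ hx2]
        have huθ : u ≤ θ := hu.2.trans (min_le_right b θ)
        have huab : u ∈ Icc a b := ⟨ha'' ▸ hu.1, hu.2.trans (min_le_left b θ)⟩
        have hcontra := hne u huab
        rw [ev1 u huθ] at hcontra
        exact hcontra (by rw [← hum]; ring)
    simp only [hd0]; rw [key]
  have dflath : ∀ a b : ℝ≥0, a ≤ b → b ≤ τ →
      (∀ u ∈ Icc a b, f u + dh u + d0 u ≠ h) → dh b = dh a := by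
    intro a b hab hbτ hne
    have e1 : min b τ = b := min_eq_left hbτ
    have e2 : min a τ = a := min_eq_left (hab.trans hbτ)
    have key : rS f θ (max θ b) = rS f θ (max θ a) := by
      have hab'' : max θ a ≤ max θ b := max_le_max le_rfl hab
      rcases (rS_mono hf (le_max_left θ a) hab'').eq_or_lt with he | hlt
      · exact he.symm
      · exfalso
        have hθb : θ ≤ b := by
          by_contra hcx; push_neg at hcx
          rw [max_eq_left hcx.le, max_eq_left (hab.trans hcx.le)] at hlt
          exact lt_irrefl _ hlt
        have hb''' : max θ b = b := max_eq_right hθb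
        rw [hb'''] at hlt hab''
        have hsp := rS_split hf (le_max_left θ a) hab''
        have hmid : rS f (max θ a) b = rS f θ b := by
          rcases le_total (rS f (max θ a) b) (rS f θ (max θ a)) with hcx | hcx
          · rw [max_eq_left hcx] at hsp; exact absurd hsp (ne_of_gt hlt)
          · rw [max_eq_right hcx] at hsp; exact hsp.symm
        obtain ⟨u, hu, huv⟩ := rS_mem hf hab''
        have hθu : θ ≤ u := (le_max_left θ a).trans hu.1
        have hfu : f u = rS f θ b := by rw [← hmid, huv]
        have huM : f u = rS f θ u := by
          have hx1 : f u ≤ rS f θ u := le_rS hf ⟨hθu, le_rfl⟩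
          have hx2 : rS f θ u ≤ rS f θ b := rS_mono hf hθu hu.2
          linarith [hfu ▸ hx2]
        have huab : u ∈ Icc a b := ⟨(le_max_right θ a).trans hu.1, hu.2⟩
        have hcontra := hne u huab
        rw [ev2 u hθu (hu.2.trans hbτ)] at hcontra
        exact hcontra (by rw [← huM]; ring)
      
    simp only [hdh, e1, e2, key]
  -- uniqueness: the reflected path coincides with the explicit formula on `[0,τ]`
  have le1 : ∀ t, t ≤ τ → f t + ch t + c0 t ≤ f t + dh t + d0 t :=
    skorohod_le h f c0 ch d0 dh τ hp.cont0 hp.conth hd0c hdhc hp.init0 hp.inith hd00 hdh0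
      (fun t ht => (dval_mem t ht).1) (fun t ht => (hp.mem_Icc t).2)
      hd0mono hp.antih
      (fun a b hab _ hne => hp.flat0 a b hab hne)
      dflath
  have le2 : ∀ t, t ≤ τ → f t + dh t + d0 t ≤ f t + ch t + c0 t :=
    skorohod_le h f d0 dh c0 ch τ hd0c hdhc hp.cont0 hp.conth hd00 hdh0 hp.init0 hp.inith
      (fun t ht => (hp.mem_Icc t).1) (fun t ht => (dval_mem t ht).2)
      hp.mono0 hdhanti
      dflat0
      (fun a b hab _ hne => hp.flath a b hab hne)
  have master : ∀ t, t ≤ τ → Λ t = f t + dh t + d0 t := fun t ht => by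
    rw [hΛ]; exact le_antisymm (le1 t ht) (le2 t ht)
  have masterA : ∀ t, t ≤ θ → Λ t = f t - rI f 0 t := fun t ht => by
    rw [master t (ht.trans hθτ), ev1 t ht]
  have masterB : ∀ t, θ ≤ t → t ≤ τ → Λ t = f t + h - rS f θ t := fun t h1 h2 => by
    rw [master t h2, ev2 t h1 h2]
  -- the middle regime
  have mid : ∀ t, σ ≤ t → t ≤ θ → rI f 0 t = f σ := by
    intro t h1 h2
    have hfσ : f σ = rI f 0 σ := hσA.2
    rcases (rI_anti hf (zero_le) h1 : rI f 0 t ≤ rI f 0 σ).eq_or_lt with he | hlt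
    · rw [he, ← hfσ]
    · exfalso
      have hsp := rI_split hf ((zero_le (a := σ))) h1
      have hmid' : rI f σ t = rI f 0 t := by
        rcases le_total (rI f 0 σ) (rI f σ t) with hc | hc
        · rw [min_eq_left hc] at hsp; exact absurd hsp (ne_of_lt hlt)
        · rw [min_eq_right hc] at hsp; exact hsp.symm
      obtain ⟨u, hu, huv⟩ := rI_mem hf h1
      have hfu : f u = rI f 0 t := by rw [← hmid', huv]
      have hum : f u = rI f 0 u := by
        have hx : rI f 0 u ≤ f u := mlef u
        have hy : rI f 0 t ≤ rI f 0 u := rI_anti hf (zero_le) hu.2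
        linarith [hfu ▸ hy]
      have huA : u ∈ A := ⟨hu.2.trans (h2.trans hθτ), hum⟩
      have := le_antisymm (hσ_ub u huA) hu.1
      rw [this] at hfu
      rw [hfσ] at hfu
      exact absurd hfu (ne_of_gt hlt)
  -- the degenerate case θ < σ
  have degen : θ < σ → ∀ t, θ ≤ t → t ≤ σ → rI f 0 t = f θ - h ∧ rS f θ t = f θ := by
    intro hθσ t h1 h2
    have hστ : σ ≤ τ := hσA.1
    have hfσ : f σ = rI f 0 σ := hσA.2
    have h3 : rI f 0 σ ≤ rI f 0 θ := rI_anti hf (zero_le) hθσ.le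
    have h4 : rS f θ σ - f σ ≤ h := K2 σ hθσ.le hστ
    have h5 : f θ ≤ rS f θ σ := le_rS hf ⟨le_rfl, hθσ.le⟩
    rw [hmθ] at h3
    have e1 : f σ = f θ - h := by linarith [hfσ ▸ h3]
    have e2 : rS f θ σ = f θ := le_antisymm (by linarith) h5
    have e3 : rI f 0 σ = f θ - h := by rw [← hfσ, e1]
    constructor
    · have q1 : rI f 0 t ≤ rI f 0 θ := rI_anti hf (zero_le) h1
      have q2 : rI f 0 σ ≤ rI f 0 t := rI_anti hf (zero_le) h2
      rw [hmθ] at q1; rw [e3] at q2; linarith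
    · have q1 : rS f θ θ ≤ rS f θ t := rS_mono hf le_rfl h1
      have q2 : rS f θ t ≤ rS f θ σ := rS_mono hf h1 h2
      rw [rS_self] at q1; rw [e2] at q2; linarith
  -- conclusion
  have hrI : ∀ t : ℝ≥0, sInf (f '' Icc 0 t) = rI f 0 t := fun _ => rfl
  have hrS : ∀ t : ℝ≥0, sSup (f '' Icc θ t) = rS f θ t := fun _ => rfl
  refine ⟨?_, ?_, ?_, ?_, ?_, ?_⟩
  · -- on [0,σ]
    intro t htσ
    rw [hrI t]
    rcases le_total t θ with h1 | h1
    · exact masterA t h1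
    · rcases h1.eq_or_lt with he | h1'
      · rw [← he]; exact masterA θ le_rfl
      · have hθσ : θ < σ := h1'.trans_le htσ
        obtain ⟨em, eM⟩ := degen hθσ t h1 htσ
        rw [masterB t h1 (htσ.trans hσA.1), eM, em]
        ring
  · -- on [σ,θ]
    intro t h1 h2
    rw [masterA t h2, mid t h1 h2]
  · -- on [θ,τ]
    intro t h1 h2
    rw [hrS t]
    exact masterB t h1 h2
  · -- Λ σ = 0
    rcases le_total σ θ with h1 | h1
    · rw [masterA σ h1, ← hσA.2, sub_self]
    · rcases h1.eq_or_lt with he | h1'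
      · rw [masterA σ he.ge, ← hσA.2, sub_self]
      · obtain ⟨em, eM⟩ := degen h1' σ h1 le_rfl
        have e1 : f σ = f θ - h := by rw [hσA.2, em]
        rw [masterB σ h1 hσA.1, eM, e1]
        ring
  · -- Λ θ = h
    rw [masterA θ le_rfl, hmθ]; ring
  · -- Λ τ = 0
    rw [masterB τ hθτ le_rfl, hMτ]; ring
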